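/- (Leaf-wise intersection criterion.) Let (G,F) be a Moser pair for Σ_k: G(t,x) = χ(t)G₀(x) with χ supported in (0,1/2) and ∫χ = 1, G₀ compactly supported with G₀⁻¹(0) = Σ_k and X_{G₀}|_{Σ_k} = X_H|_{Σ_k}; and F(t,·) ≡ 0 for t ∈ [1/2,1]. If (x,η) is a critical point of the perturbed Rabinowitz functional, i.e. ẋ = ηχ(t)X_{G₀}(x) + X_F(t,x) and ∫_{S¹}χ(t)G₀(x(t))dt = 0, then y := x(1/2) lies in Σ_k and ψ(y) ∈ 𝓛_y for ψ = φ₁^F, i.e. y is a leaf-wise intersection point for ψ. -/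

import Mathlib

open MeasureTheory

/-!
STATEMENT 18 (Leaf-wise intersection criterion): Let `(G,F)` be a Moser pair for `Σ_k`:
`G(t,x) = χ(t) G₀(x)` with `χ` supported in `(0,1/2)` and `∫χ = 1`, `G₀` with
`G₀⁻¹(0) = Σ_k = H⁻¹(k)` and `X_{G₀}|_{Σ_k} = X_H|_{Σ_k}`; and the perturbation `F` acts only
on the second half of the circle (`X_F(t,·) = 0` for `t ∈ [0,1/2]`, so that `ψ = φ₁^F` is
computed by flowing `X_F` on `[1/2,1]`, as in the proof of the Albers–Frauenfelder lemma).
If `(x,η)` is a critical point of the perturbed Rabinowitz functional, i.e.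
`ẋ = η χ(t) X_{G₀}(x) + X_F(t,x)` and `∫_{S¹} χ(t) G₀(x(t)) dt = 0`, then `y := x(1/2)` lies in
`Σ_k` (i.e. `H(y) = k`) and `ψ(y) ∈ 𝓛_y = {φ_t^H(y) : t ∈ ℝ}`, i.e. `y` is a leaf-wise
intersection point for `ψ`.

Phase space is modeled by a normed space `E`; `Φ` is the (complete) flow of the Lipschitz
vector field `X_H`, and `ψ` is the time-one map of the Hamiltonian isotopy generated by `X_F`,
characterized by `ψ(z(1/2)) = z(1)` for every solution `z` of `ż = X_F(t,z)` on `[1/2,1]`.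
-/
theorem leafwise_intersection_criterion
    {E : Type*} [NormedAddCommGroup E] [NormedSpace ℝ E]
    (H G₀ : E → ℝ) (XH XG : E → E) (XF : ℝ → E → E) (k : ℝ)
    (hSigma : G₀ ⁻¹' {0} = H ⁻¹' {k})
    (hXGH : ∀ y, G₀ y = 0 → XG y = XH y)
    (dG : E → E →L[ℝ] ℝ) (hdG : ∀ y, HasFDerivAt G₀ (dG y) y)
    (hcons : ∀ y, dG y (XG y) = 0)
    (χ : ℝ → ℝ) (hχc : Continuous χ)
    (hχsupp : ∀ t, t ∉ Set.Ioo (0:ℝ) (1/2) → χ t = 0)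
    (hχint : (∫ t in (0:ℝ)..1, χ t) = 1)
    (K : NNReal) (hXH_lip : LipschitzWith K XH) (hXG_cont : Continuous XG)
    (Φ : ℝ → E → E) (hΦ0 : ∀ y, Φ 0 y = y)
    (hΦ : ∀ y s, HasDerivAt (fun u => Φ u y) (XH (Φ s y)) s)
    (ψ : E → E)
    (hψ : ∀ z : ℝ → E, (∀ t ∈ Set.Icc (1/2 : ℝ) 1, HasDerivAt z (XF t (z t)) t) →
      ψ (z (1/2)) = z 1)
    (hF0 : ∀ t ∈ Set.Icc (0:ℝ) (1/2), ∀ y, XF t y = 0)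
    (x : ℝ → E) (η : ℝ)
    (hx : ∀ t, HasDerivAt x ((η * χ t) • XG (x t) + XF t (x t)) t)
    (hxper : Function.Periodic x 1)
    (hconstraint : (∫ t in (0:ℝ)..1, χ t * G₀ (x t)) = 0) :
    H (x (1/2)) = k ∧ ∃ s : ℝ, ψ (x (1/2)) = Φ s (x (1/2)) := by
  -- g = G₀ ∘ x has zero derivative on [0, 1/2]
  have hgder : ∀ t ∈ Set.Icc (0:ℝ) (1/2), HasDerivAt (fun t => G₀ (x t)) 0 t := by
    intro t ht
    have h1 := (hdG (x t)).comp_hasDerivAt t (hx t)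
    simpa [hF0 t ht, hcons, Function.comp_def] using h1
  have hgconst : ∀ t ∈ Set.Icc (0:ℝ) (1/2), G₀ (x t) = G₀ (x 0) := by
    have hcont : ContinuousOn (fun t => G₀ (x t)) (Set.Icc (0:ℝ) (1/2)) :=
      fun t ht => ((hgder t ht).continuousAt).continuousWithinAt
    exact constant_of_has_deriv_right_zero hcont
      (fun u hu => (hgder u (Set.Ico_subset_Icc_self hu)).hasDerivWithinAt)
  -- the constraint forces G₀ (x 0) = 0
  have hc0 : G₀ (x 0) = 0 := by
    have key : ∀ t, χ t * G₀ (x t) = χ t * G₀ (x 0) := by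
      intro t
      by_cases h : t ∈ Set.Ioo (0:ℝ) (1/2)
      · rw [hgconst t (Set.Ioo_subset_Icc_self h)]
      · simp [hχsupp t h]
    have : (∫ t in (0:ℝ)..1, χ t * G₀ (x t)) = (∫ t in (0:ℝ)..1, χ t) * G₀ (x 0) := by
      simp_rw [key]
      exact intervalIntegral.integral_mul_const _ _
    rw [hconstraint, hχint, one_mul] at this
    exact this.symm
  have hg0 : ∀ t ∈ Set.Icc (0:ℝ) (1/2), G₀ (x t) = 0 := fun t ht => (hgconst t ht).trans hc0
  have hhalf : H (x (1/2)) = k := by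
    have : x (1/2) ∈ G₀ ⁻¹' {0} := hg0 _ ⟨by norm_num, le_refl _⟩
    rw [hSigma] at this; exact this
  refine ⟨hhalf, ?_⟩
  -- bound on χ
  obtain ⟨C, hC⟩ : ∃ C, ∀ t ∈ Set.Icc (0:ℝ) (1/2), ‖χ t‖ ≤ C :=
    isCompact_Icc.exists_bound_of_continuousOn hχc.continuousOn
  have hCall : ∀ t, ‖χ t‖ ≤ C := by
    intro t
    by_cases h : t ∈ Set.Icc (0:ℝ) (1/2)
    · exact hC t h
    · have : χ t = 0 := hχsupp t (fun h' => h (Set.Ioo_subset_Icc_self h'))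
      rw [this, norm_zero]
      have := hC 0 ⟨le_refl _, by norm_num⟩
      exact le_trans (norm_nonneg (χ 0)) this
  -- reparametrized flow
  set A : ℝ → ℝ := fun t => η * ∫ s in (0:ℝ)..t, χ s with hA_def
  have hA : ∀ t, HasDerivAt A (η * χ t) t := by
    intro t
    have := intervalIntegral.integral_hasDerivAt_right (hχc.intervalIntegrable 0 t)
      (hχc.stronglyMeasurableAtFilter _ _) hχc.continuousAt
    simpa [hA_def] using this.const_mul η
  set v : ℝ → E → E := fun t y => (η * χ t) • XH y with hv_def
  set K' : NNReal := (|η| * C).toNNReal * K with hK'_def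
  have hv : ∀ t, LipschitzWith K' (v t) := by
    intro t
    refine LipschitzWith.weaken ((lipschitzWith_smul (η * χ t)).comp hXH_lip) ?_
    apply mul_le_mul_left
    rw [← NNReal.coe_le_coe, coe_nnnorm, Real.coe_toNNReal]
    · calc ‖η * χ t‖ = |η| * ‖χ t‖ := by rw [norm_mul]; rfl
        _ ≤ |η| * C := mul_le_mul_of_nonneg_left (hCall t) (abs_nonneg η)
    · exact mul_nonneg (abs_nonneg η) ((norm_nonneg (χ 0)).trans (hCall 0))
  -- x follows the reparametrized flow on [0,1/2]
  have hxflow : Set.EqOn x (fun t => Φ (A t) (x 0)) (Set.Icc (0:ℝ) (1/2)) := by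
    apply ODE_solution_unique (v := v) hv
    · exact fun t ht => (hx t).continuousAt.continuousWithinAt
    · intro t ht
      have ht' : t ∈ Set.Icc (0:ℝ) (1/2) := Set.Ico_subset_Icc_self ht
      have : HasDerivAt x ((η * χ t) • XH (x t)) t := by
        have h1 := hx t
        rw [hF0 t ht' (x t), hXGH (x t) (hg0 t ht'), add_zero] at h1
        exact h1
      exact this.hasDerivWithinAt
    · exact fun t ht => ((hΦ (x 0) (A t)).scomp t (hA t)).continuousAt.continuousWithinAt
    · intro t ht
      exact ((hΦ (x 0) (A t)).scomp t (hA t)).hasDerivWithinAt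
    · simp [hA_def, hΦ0]
  have hxhalf : x (1/2) = Φ (A (1/2)) (x 0) := hxflow ⟨by norm_num, le_refl _⟩
  set τ := A (1/2) with hτ
  -- group property: x 0 = Φ (-τ) (x (1/2))
  have hgroup : x 0 = Φ (-τ) (x (1/2)) := by
    set p : ℝ → E := fun u => Φ (τ + u) (x 0) with hp
    set q : ℝ → E := fun u => Φ u (x (1/2)) with hq
    have hp' : ∀ u, HasDerivAt p (XH (p u)) u := by
      intro u
      have := (hΦ (x 0) (τ + u)).scomp u ((hasDerivAt_id u).const_add τ)
      simpa [hp, Function.comp_def] using this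
    have hq' : ∀ u, HasDerivAt q (XH (q u)) u := fun u => hΦ (x (1/2)) u
    have heq : Set.EqOn p q (Set.Icc (-(|τ|+1)) (|τ|+1)) := by
      apply ODE_solution_unique_of_mem_Icc (v := fun _ => XH) (s := fun _ => Set.univ)
        (t₀ := 0)
        (fun _ _ => hXH_lip.lipschitzOnWith)
        (Set.mem_Ioo.mpr ⟨by linarith [abs_nonneg τ], by linarith [abs_nonneg τ]⟩)
        (fun u _ => (hp' u).continuousAt.continuousWithinAt)
        (fun u _ => hp' u) (fun u _ => trivial)
        (fun u _ => (hq' u).continuousAt.continuousWithinAt)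
        (fun u _ => hq' u) (fun u _ => trivial)
      show Φ (τ + 0) (x 0) = Φ 0 (x (1/2))
      rw [add_zero, hΦ0, ← hxhalf]
    have hmem : -τ ∈ Set.Icc (-(|τ|+1)) (|τ|+1) := by
      constructor
      · simp only [neg_le_neg_iff]
        · nlinarith [abs_nonneg τ, le_abs_self τ, neg_abs_le τ]
      · nlinarith [le_abs_self τ, neg_abs_le τ]
    have h2 := heq hmem
    simp only [hp, hq] at h2
    rw [show τ + -τ = 0 by ring, hΦ0] at h2
    exact h2
  -- ψ (x (1/2)) = x 1 = x 0
  have hψx : ψ (x (1/2)) = x 1 := by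
    apply hψ x
    intro t ht
    have hχ0 : χ t = 0 := hχsupp t (by intro h'; linarith [h'.2, ht.1])
    have := hx t
    rw [hχ0, mul_zero, zero_smul, zero_add] at this
    exact this
  have hx1 : x 1 = x 0 := by
    have := hxper 0
    simpa using this
  exact ⟨-τ, by rw [hψx, hx1, hgroup]⟩
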